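/- Let X, Y be symmetric d×d real matrices, n > 0 and κ ≥ 0 such that ⟨Xq, q⟩ − ⟨Y q̃, q̃⟩ ≤ 3n|q − q̃|² + κ(|q|² + |q̃|²) for all q, q̃ ∈ ℝ^d, and let σ₁, σ₂ ∈ ℝ^{d×d}. Then Tr(σ₁σ₁ᵀ X) − Tr(σ₂σ₂ᵀ Y) ≤ 3n‖σ₁ − σ₂‖² + κ(‖σ₁‖² + ‖σ₂‖²), where ‖·‖ is the Frobenius norm. In particular, if σ is Lipschitz in the space variable with constant C, i.e. ‖σ(t,x) − σ(t,y)‖ ≤ C|x − y|, then Tr((σσᵀ)(t,x) X) − Tr((σσᵀ)(t,y) Y) ≤ 3C²n|x − y|² + κ(‖σ(t,x)‖² + ‖σ(t,y)‖²). -/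

import Mathlib

open Matrix

noncomputable section

/-- Euclidean norm on `Fin d → ℝ`. -/
def eunorm {d : ℕ} (v : Fin d → ℝ) : ℝ := Real.sqrt (∑ i, (v i)^2)

/-- Squared Frobenius norm of a matrix. -/
def frobSq {d : ℕ} (M : Matrix (Fin d) (Fin d) ℝ) : ℝ := ∑ i, ∑ j, (M i j)^2

lemma frobSq_comm {d : ℕ} (M : Matrix (Fin d) (Fin d) ℝ) :
    frobSq M = ∑ j, ∑ i, (M i j)^2 := Finset.sum_comm

lemma frobSq_nonneg {d : ℕ} (M : Matrix (Fin d) (Fin d) ℝ) : 0 ≤ frobSq M := by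
  apply Finset.sum_nonneg; intro i _; apply Finset.sum_nonneg; intro j _; positivity

lemma trace_col_sum {d : ℕ} (X σ : Matrix (Fin d) (Fin d) ℝ) :
    Matrix.trace (σ * σᵀ * X)
      = ∑ j, dotProduct (X.mulVec (fun i => σ i j)) (fun i => σ i j) := by
  rw [show σ * σᵀ * X = σ * (σᵀ * X) by rw [mul_assoc], Matrix.trace_mul_comm]
  simp only [Matrix.trace, Matrix.diag, Matrix.mul_apply, Matrix.transpose_apply,
    dotProduct, Matrix.mulVec, Finset.sum_mul, Finset.mul_sum]
  refine Finset.sum_congr rfl fun j _ => ?_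
  rw [Finset.sum_comm]
  exact Finset.sum_congr rfl fun k _ => Finset.sum_congr rfl fun m _ => by ring

/-- If symmetric matrices `X, Y` satisfy
`⟨Xq, q⟩ − ⟨Yq̃, q̃⟩ ≤ 3n|q − q̃|² + κ(|q|² + |q̃|²)` for all `q, q̃`, then for
any matrices `σ₁, σ₂`:
`Tr(σ₁σ₁ᵀX) − Tr(σ₂σ₂ᵀY) ≤ 3n‖σ₁ − σ₂‖² + κ(‖σ₁‖² + ‖σ₂‖²)` (Frobenius norms).
In particular, if `σ(t,·)` is `C`-Lipschitz, then
`Tr((σσᵀ)(t,x)X) − Tr((σσᵀ)(t,y)Y) ≤ 3C²n|x−y|² + κ(‖σ(t,x)‖² + ‖σ(t,y)‖²)`. -/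
theorem trace_estimate_from_quadratic_forms {d : ℕ}
    (X Y : Matrix (Fin d) (Fin d) ℝ) (n κ : ℝ)
    (hX : X.IsSymm) (hY : Y.IsSymm) (hn : 0 < n) (hκ : 0 ≤ κ)
    (hq : ∀ q q' : Fin d → ℝ,
      dotProduct (X.mulVec q) q - dotProduct (Y.mulVec q') q'
        ≤ 3 * n * (∑ i, (q i - q' i) ^ 2)
          + κ * ((∑ i, (q i) ^ 2) + ∑ i, (q' i) ^ 2)) :
    (∀ σ₁ σ₂ : Matrix (Fin d) (Fin d) ℝ,
      Matrix.trace (σ₁ * σ₁ᵀ * X) - Matrix.trace (σ₂ * σ₂ᵀ * Y)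
        ≤ 3 * n * frobSq (σ₁ - σ₂) + κ * (frobSq σ₁ + frobSq σ₂)) ∧
    (∀ (C : ℝ), 0 ≤ C →
      ∀ (σ : ℝ → (Fin d → ℝ) → Matrix (Fin d) (Fin d) ℝ),
      (∀ (t : ℝ) (x y : Fin d → ℝ),
        Real.sqrt (frobSq (σ t x - σ t y)) ≤ C * eunorm (x - y)) →
      ∀ (t : ℝ) (x y : Fin d → ℝ),
        Matrix.trace (σ t x * (σ t x)ᵀ * X) - Matrix.trace (σ t y * (σ t y)ᵀ * Y)
          ≤ 3 * C^2 * n * (eunorm (x - y))^2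
            + κ * (frobSq (σ t x) + frobSq (σ t y))) := by
  have main : ∀ σ₁ σ₂ : Matrix (Fin d) (Fin d) ℝ,
      Matrix.trace (σ₁ * σ₁ᵀ * X) - Matrix.trace (σ₂ * σ₂ᵀ * Y)
        ≤ 3 * n * frobSq (σ₁ - σ₂) + κ * (frobSq σ₁ + frobSq σ₂) := by
    intro σ₁ σ₂
    calc Matrix.trace (σ₁ * σ₁ᵀ * X) - Matrix.trace (σ₂ * σ₂ᵀ * Y)
        = ∑ j, (dotProduct (X.mulVec (fun i => σ₁ i j)) (fun i => σ₁ i j)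
            - dotProduct (Y.mulVec (fun i => σ₂ i j)) (fun i => σ₂ i j)) := by
          rw [trace_col_sum X σ₁, trace_col_sum Y σ₂, Finset.sum_sub_distrib]
      _ ≤ ∑ j, (3 * n * (∑ i, (σ₁ i j - σ₂ i j) ^ 2)
            + κ * ((∑ i, (σ₁ i j) ^ 2) + ∑ i, (σ₂ i j) ^ 2)) :=
          Finset.sum_le_sum fun j _ => hq (fun i => σ₁ i j) (fun i => σ₂ i j)
      _ = 3 * n * frobSq (σ₁ - σ₂) + κ * (frobSq σ₁ + frobSq σ₂) := by
          simp only [frobSq_comm, Matrix.sub_apply, Finset.sum_add_distrib,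
            Finset.mul_sum, mul_add]
  refine ⟨main, ?_⟩
  intro C hC σ hLip t x y
  have h1 := main (σ t x) (σ t y)
  have hfn := frobSq_nonneg (σ t x - σ t y)
  have he : 0 ≤ eunorm (x - y) := Real.sqrt_nonneg _
  have h2 : frobSq (σ t x - σ t y) ≤ C^2 * (eunorm (x - y))^2 := by
    have := hLip t x y
    nlinarith [Real.sq_sqrt hfn, Real.sqrt_nonneg (frobSq (σ t x - σ t y))]
  nlinarith [h2, hn.le]
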